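/- Let V, D : H → ℓ²(ℕ) be isometries, {Γ_k}_{k=1}^r and {Λ_l}_{l=1}^r families of index sets, and suppose ‖P_{Γ_k} V D* P_{Λ_l}‖ ≤ ω(k,l) with Σ_{l=1}^r ω(k,l) ≤ C for each k. Define Θ = {g ∈ H : g = D*η for some η, and ‖P_{Λ_l} D g‖_{ℓ²}² ≤ κ_l for l = 1,…,r} and \hatκ_k = max_{g∈Θ} ‖P_{Γ_k} V g‖². If additionally the Λ_l partition ℕ, then \hatκ_k ≤ C Σ_{l=1}^r ω(k,l) κ_l for each k = 1,…,r. -/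
import Mathlib


open scoped Classical
noncomputable abbrev ℓ2 := lp (fun _ : ℕ => ℂ) 2

/-- Relative sparsity bound (Lemma on relative sparsity): if
`‖P_{Γ_k} V D* P_{Λ_l}‖ ≤ ω(k,l)` with `Σ_l ω(k,l) ≤ C`, and the `Λ_l` partition `ℕ`,
then every `g = D*η` with `‖P_{Λ_l} D g‖² ≤ κ_l` for all `l` satisfies
`‖P_{Γ_k} V g‖² ≤ C Σ_l ω(k,l) κ_l`. -/
theorem stmt_16 {H : Type*} [NormedAddCommGroup H] [InnerProductSpace ℂ H] [CompleteSpace H]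
    (V D : H →L[ℂ] ℓ2) (hV : ∀ f : H, ‖V f‖ = ‖f‖) (hD : ∀ f : H, ‖D f‖ = ‖f‖)
    (r : ℕ) (Γ Λ : Fin r → Set ℕ)
    (hΛdisj : ∀ l l', l ≠ l' → Disjoint (Λ l) (Λ l'))
    (hΛcover : (⋃ l, Λ l) = Set.univ)
    (PΓ PΛ : Fin r → (ℓ2 →L[ℂ] ℓ2))
    (hPΓ : ∀ k (z : ℓ2) (j : ℕ), (PΓ k z) j = if j ∈ Γ k then z j else 0)
    (hPΛ : ∀ l (z : ℓ2) (j : ℕ), (PΛ l z) j = if j ∈ Λ l then z j else 0)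
    (ω : Fin r → Fin r → ℝ) (hω0 : ∀ k l, 0 ≤ ω k l)
    (κ : Fin r → ℝ) (hκ0 : ∀ l, 0 ≤ κ l)
    (C : ℝ)
    (hωC : ∀ k, ∑ l, ω k l ≤ C)
    (hloc : ∀ k l, ‖(PΓ k).comp ((V.comp (ContinuousLinearMap.adjoint D)).comp (PΛ l))‖ ≤ ω k l)
    (g : H) (η : ℓ2) (hg : g = ContinuousLinearMap.adjoint D η)
    (hgκ : ∀ l, ‖PΛ l (D g)‖ ^ 2 ≤ κ l)
    (k : Fin r) :
    ‖PΓ k (V g)‖ ^ 2 ≤ C * ∑ l, ω k l * κ l := by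
  classical
  -- D is a linear isometry, hence D* D = id
  have hDD : ∀ f : H, ContinuousLinearMap.adjoint D (D f) = f := by
    intro f
    apply ext_inner_right ℂ
    intro x
    rw [ContinuousLinearMap.adjoint_inner_left]
    exact (⟨D.toLinearMap, hD⟩ : H →ₗᵢ[ℂ] ℓ2).inner_map_map f x
  -- the PΛ l sum to the identity
  have hPΛsum : ∀ z : ℓ2, (∑ l, PΛ l z) = z := by
    intro z
    apply lp.ext
    funext j
    rw [lp.coeFn_sum, Finset.sum_apply]
    have hjmem : ∃ l, j ∈ Λ l := by
      have : (j : ℕ) ∈ ⋃ l, Λ l := hΛcover ▸ Set.mem_univ j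
      simpa using this
    obtain ⟨l₀, hl₀⟩ := hjmem
    have : (∑ l, (PΛ l z : ℕ → ℂ) j) = z j := by
      rw [Finset.sum_eq_single l₀]
      · rw [hPΛ l₀ z j, if_pos hl₀]
      · intro l _ hl
        rw [hPΛ l z j, if_neg]
        intro hj
        exact (hΛdisj l l₀ hl).le_bot ⟨hj, hl₀⟩
      · intro h; exact absurd (Finset.mem_univ l₀) h
    exact this
  -- PΛ l is idempotent
  have hidem : ∀ l (z : ℓ2), PΛ l (PΛ l z) = PΛ l z := by
    intro l z
    apply lp.ext
    funext j
    rw [hPΛ l _ j, hPΛ l z j]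
    split_ifs with h <;> rfl
  set T : Fin r → (ℓ2 →L[ℂ] ℓ2) :=
    fun l => (PΓ k).comp ((V.comp (ContinuousLinearMap.adjoint D)).comp (PΛ l)) with hT
  -- key decomposition
  have key : PΓ k (V g) = ∑ l, T l (PΛ l (D g)) := by
    conv_lhs => rw [← hDD g, ← hPΛsum (D g)]
    rw [map_sum, map_sum, map_sum]
    refine Finset.sum_congr rfl fun l _ => ?_
    simp [hT, ContinuousLinearMap.comp_apply, hidem]
  have h1 : ‖PΓ k (V g)‖ ≤ ∑ l, ω k l * Real.sqrt (κ l) := by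
    rw [key]
    refine (norm_sum_le _ _).trans (Finset.sum_le_sum fun l _ => ?_)
    have hb : ‖PΛ l (D g)‖ ≤ Real.sqrt (κ l) := by
      nlinarith [Real.sq_sqrt (hκ0 l), Real.sqrt_nonneg (κ l),
        norm_nonneg (PΛ l (D g)), hgκ l]
    calc ‖T l (PΛ l (D g))‖ ≤ ‖T l‖ * ‖PΛ l (D g)‖ :=
          ContinuousLinearMap.le_opNorm _ _
      _ ≤ ω k l * Real.sqrt (κ l) :=
          mul_le_mul (hloc k l) hb (norm_nonneg _) (hω0 k l)
  have h2 : ‖PΓ k (V g)‖ ^ 2 ≤ (∑ l, ω k l * Real.sqrt (κ l)) ^ 2 :=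
    pow_le_pow_left₀ (norm_nonneg _) h1 2
  have h3 : (∑ l, ω k l * Real.sqrt (κ l)) ^ 2 ≤ (∑ l, ω k l) * (∑ l, ω k l * κ l) := by
    have hcs := Finset.sum_mul_sq_le_sq_mul_sq Finset.univ
      (fun l => Real.sqrt (ω k l)) (fun l => Real.sqrt (ω k l * κ l))
    have e1 : ∀ l : Fin r, Real.sqrt (ω k l) * Real.sqrt (ω k l * κ l)
        = ω k l * Real.sqrt (κ l) := by
      intro l
      rw [← Real.sqrt_mul (hω0 k l), ← mul_assoc, Real.sqrt_mul (mul_self_nonneg _),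
        Real.sqrt_mul_self (hω0 k l)]
    have e2 : ∀ l : Fin r, Real.sqrt (ω k l) ^ 2 = ω k l := fun l => Real.sq_sqrt (hω0 k l)
    have e3 : ∀ l : Fin r, Real.sqrt (ω k l * κ l) ^ 2 = ω k l * κ l :=
      fun l => Real.sq_sqrt (mul_nonneg (hω0 k l) (hκ0 l))
    simpa only [e1, e2, e3] using hcs
  have h4 : (∑ l, ω k l) * (∑ l, ω k l * κ l) ≤ C * ∑ l, ω k l * κ l :=
    mul_le_mul_of_nonneg_right (hωC k)
      (Finset.sum_nonneg fun l _ => mul_nonneg (hω0 k l) (hκ0 l))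
  linarith
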